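/- For any set 𝓕 ⊆ {0,1}ⁿ, the set of extreme points of conv(Π(𝓕)) equals H ∩ {(y₀,y) ∈ ℝ×ℝⁿ : y ∈ y₀·𝓕, y₀ > 0}, i.e. the extreme points of conv(Π(𝓕)) are exactly the points of Π(𝓕). -/

import Mathlib

/-- If a linear functional is nonnegative on `S` and vanishes only at `p` on `S`,
then any point of the convex hull where it vanishes equals `p`. -/
lemma face_eq_single {E : Type*} [AddCommGroup E] [Module ℝ E]
    (f : E →ₗ[ℝ] ℝ) (S : Set E) (hS : ∀ q ∈ S, 0 ≤ f q) (p : E)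
    (hp : ∀ q ∈ S, f q = 0 → q = p) :
    ∀ y ∈ convexHull ℝ S, f y = 0 → y = p := by
  intro y hy hfy
  rw [convexHull_eq] at hy
  obtain ⟨ι, t, w, z, hw, hw1, hz, hy⟩ := hy
  rw [Finset.centerMass_eq_of_sum_1 _ _ hw1] at hy
  have hterm : ∀ i ∈ t, w i * f (z i) = 0 := by
    rw [← Finset.sum_eq_zero_iff_of_nonneg
      (fun i hi => mul_nonneg (hw i hi) (hS _ (hz i hi)))]
    rw [← hfy, ← hy, map_sum]
    simp [smul_eq_mul]
  have hconst : ∀ i ∈ t, w i • z i = w i • p := by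
    intro i hi
    rcases eq_or_ne (w i) 0 with h | h
    · simp [h]
    · have hz0 : f (z i) = 0 := (mul_eq_zero.mp (hterm i hi)).resolve_left h
      rw [hp _ (hz i hi) hz0]
  calc y = ∑ i ∈ t, w i • z i := hy.symm
    _ = ∑ i ∈ t, w i • p := Finset.sum_congr rfl hconst
    _ = (∑ i ∈ t, w i) • p := by rw [Finset.sum_smul]
    _ = p := by rw [hw1, one_smul]

/-- The extreme points of `conv(Π(𝓕))` are exactly the points of `Π(𝓕) = H ∩ K`. -/
theorem stmt4 (n : ℕ) (hn : 1 ≤ n) (u0 : ℝ) (hu0 : 0 < u0)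
    (u : Fin n → ℝ) (hu : ∀ j, 0 ≤ u j)
    (F : Set (Fin n → ℝ)) (hF : ∀ x ∈ F, ∀ j, x j = 0 ∨ x j = 1) :
    Set.extremePoints ℝ (convexHull ℝ {p : ℝ × (Fin n → ℝ) |
        u0 * p.1 + ∑ j, u j * p.2 j = 1 ∧ (∃ x ∈ F, p.2 = p.1 • x) ∧ 0 < p.1}) =
      {p : ℝ × (Fin n → ℝ) | u0 * p.1 + ∑ j, u j * p.2 j = 1} ∩
        {p : ℝ × (Fin n → ℝ) | (∃ x ∈ F, p.2 = p.1 • x) ∧ 0 < p.1} := by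
  classical
  set S : Set (ℝ × (Fin n → ℝ)) := {p : ℝ × (Fin n → ℝ) |
      u0 * p.1 + ∑ j, u j * p.2 j = 1 ∧ (∃ x ∈ F, p.2 = p.1 • x) ∧ 0 < p.1} with hSdef
  apply Set.Subset.antisymm
  · intro p hp
    have hpS : p ∈ S := extremePoints_convexHull_subset hp
    exact ⟨hpS.1, hpS.2⟩
  · rintro p ⟨h1, ⟨x, hxF, hx⟩, hpos⟩
    have hpS : p ∈ S := ⟨h1, ⟨x, hxF, hx⟩, hpos⟩
    -- the exposing linear functional
    set π : (j : Fin n) → (ℝ × (Fin n → ℝ)) →ₗ[ℝ] ℝ :=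
      fun j => (LinearMap.proj j).comp (LinearMap.snd ℝ ℝ (Fin n → ℝ)) with hπ
    set f : (ℝ × (Fin n → ℝ)) →ₗ[ℝ] ℝ :=
      ∑ j : Fin n, (if x j = 0 then π j else LinearMap.fst ℝ ℝ (Fin n → ℝ) - π j) with hfdef
    have hf : ∀ q : ℝ × (Fin n → ℝ),
        f q = ∑ j, (if x j = 0 then q.2 j else q.1 - q.2 j) := by
      intro q
      rw [hfdef, LinearMap.sum_apply]
      refine Finset.sum_congr rfl fun j _ => ?_
      by_cases h : x j = 0 <;> simp [h, hπ]
    -- nonnegativity on S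
    have hSnn : ∀ q ∈ S, 0 ≤ f q := by
      rintro q ⟨-, ⟨z, hzF, hz⟩, hq1⟩
      rw [hf]
      refine Finset.sum_nonneg fun j _ => ?_
      have hzj : z j = 0 ∨ z j = 1 := hF z hzF j
      have hq2 : q.2 j = q.1 * z j := by rw [hz]; simp
      split_ifs with h
      · rw [hq2]
        rcases hzj with h' | h' <;> simp [h'] <;> positivity
      · rw [hq2]
        rcases hzj with h' | h' <;> simp [h']
        · exact le_of_lt hq1
    -- f vanishes only at p on S
    have hSuniq : ∀ q ∈ S, f q = 0 → q = p := by
      rintro q ⟨hq1eq, ⟨z, hzF, hz⟩, hq1⟩ hfq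
      rw [hf] at hfq
      have hterm : ∀ j ∈ Finset.univ, (if x j = 0 then q.2 j else q.1 - q.2 j) = 0 := by
        rw [← Finset.sum_eq_zero_iff_of_nonneg]
        · exact hfq
        · intro j _
          have hzj : z j = 0 ∨ z j = 1 := hF z hzF j
          have hq2 : q.2 j = q.1 * z j := by rw [hz]; simp
          split_ifs with h
          · rw [hq2]; rcases hzj with h' | h' <;> simp [h'] <;> positivity
          · rw [hq2]; rcases hzj with h' | h' <;> simp [h']
            · exact le_of_lt hq1
      have hzx : z = x := by
        funext j
        have hq2 : q.2 j = q.1 * z j := by rw [hz]; simp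
        have ht := hterm j (Finset.mem_univ j)
        by_cases h : x j = 0
        · rw [if_pos h, hq2] at ht
          have : z j = 0 := by
            rcases mul_eq_zero.mp ht with h' | h'
            · exact absurd h' (ne_of_gt hq1)
            · exact h'
          rw [this, h]
        · rw [if_neg h] at ht
          have hx1 : x j = 1 := (hF x hxF j).resolve_left h
          have : q.1 * (1 - z j) = 0 := by rw [hq2] at ht; ring_nf; ring_nf at ht; linarith
          rcases mul_eq_zero.mp this with h' | h'
          · exact absurd h' (ne_of_gt hq1)
          · rw [hx1]; linarith
      -- now derive q.1 = p.1 from the hyperplane equation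
      set c : ℝ := u0 + ∑ j, u j * x j with hc
      have hcpos : 0 < c := by
        have : 0 ≤ ∑ j, u j * x j := Finset.sum_nonneg fun j _ => by
          rcases hF x hxF j with h' | h' <;> simp [h', hu j]
        linarith
      have hqc : q.1 * c = 1 := by
        rw [← hq1eq, hc, hz, hzx]
        simp only [Pi.smul_apply, smul_eq_mul]
        rw [mul_add, Finset.mul_sum]
        congr 1
        · ring
        · exact Finset.sum_congr rfl fun j _ => by ring
      have hpc : p.1 * c = 1 := by
        rw [← h1, hc, hx]
        simp only [Set.mem_setOf_eq, Pi.smul_apply, smul_eq_mul]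
        rw [mul_add, Finset.mul_sum]
        congr 1
        · ring
        · exact Finset.sum_congr rfl fun j _ => by ring
      have hq1p1 : q.1 = p.1 := by
        have := hqc.trans hpc.symm
        exact mul_right_cancel₀ (ne_of_gt hcpos) this
      have : q.2 = p.2 := by rw [hz, hzx, hq1p1, ← hx]
      exact Prod.ext hq1p1 this
    -- f p = 0
    have hfp : f p = 0 := by
      rw [hf]
      refine Finset.sum_eq_zero fun j _ => ?_
      have hq2 : p.2 j = p.1 * x j := by rw [hx]; simp
      by_cases h : x j = 0
      · rw [if_pos h, hq2, h, mul_zero]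
      · have hx1 : x j = 1 := (hF x hxF j).resolve_left h
        rw [if_neg h, hq2, hx1, mul_one, sub_self]
    -- nonnegativity on the convex hull
    have hhull : ∀ y ∈ convexHull ℝ S, 0 ≤ f y := by
      intro y hy
      have : convexHull ℝ S ⊆ f ⁻¹' Set.Ici 0 :=
        convexHull_min (fun q hq => hSnn q hq) ((convex_Ici (0:ℝ)).linear_preimage f)
      exact this hy
    refine ⟨subset_convexHull ℝ S hpS, ?_⟩
    intro a ha b hb hseg
    obtain ⟨ta, tb, hta, htb, hsum, heq⟩ := hseg
    have hfa : 0 ≤ f a := hhull a ha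
    have hfb : 0 ≤ f b := hhull b hb
    have hcomb : ta * f a + tb * f b = 0 := by
      have : f (ta • a + tb • b) = f p := by rw [heq]
      rw [map_add, map_smul, map_smul, smul_eq_mul, smul_eq_mul, hfp] at this
      exact this
    have ha' : 0 ≤ ta * f a := mul_nonneg hta.le hfa
    have hb' : 0 ≤ tb * f b := mul_nonneg htb.le hfb
    have ha0 : ta * f a = 0 := by linarith
    have hb0 : tb * f b = 0 := by linarith
    have hfa0 : f a = 0 := (mul_eq_zero.mp ha0).resolve_left (ne_of_gt hta)
    have hfb0 : f b = 0 := (mul_eq_zero.mp hb0).resolve_left (ne_of_gt htb)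
    exact face_eq_single f S hSnn p hSuniq a ha hfa0
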